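/- Let a < b be real numbers and let f : [a,b) × (a,b) → ℝ be a function such that f and its partial derivatives ∂f/∂x, ∂f/∂κ, ∂²f/∂x∂κ exist, are continuous, and are bounded on [a,b) × (a,b). Define F(κ) = ∫_a^κ f(x,κ)/√(κ−x) dx for κ ∈ (a,b). Then there is a constant C > 0 such that for all κ ∈ (a,b): (a) |F(κ) − 2 f(a,κ) √(κ−a)| ≤ C (κ−a)^{3/2}; and (b) F is differentiable at κ with |F′(κ) − f(a,κ)/√(κ−a)| ≤ C √(κ−a). -/

import Mathlib

open MeasureTheory Set Filter Topology

lemma aux_rpow_inv {u : ℝ} (hu : 0 ≤ u) : u ^ (-(1/2) : ℝ) = (Real.sqrt u)⁻¹ := by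
  rw [Real.sqrt_eq_rpow, ← Real.rpow_neg hu]

lemma aux_sqrt_int {c κ : ℝ} (h : c < κ) :
    ∫ x in Ioo c κ, (κ - x) ^ (-(1/2) : ℝ) = 2 * Real.sqrt (κ - c) := by
  rw [← integral_Ioc_eq_integral_Ioo, ← intervalIntegral.integral_of_le h.le,
    intervalIntegral.integral_comp_sub_left (fun u => u ^ (-(1/2) : ℝ)) κ, sub_self]
  rw [integral_rpow (Or.inl (by norm_num : (-1:ℝ) < -(1/2)))]
  rw [Real.zero_rpow (by norm_num), Real.sqrt_eq_rpow]
  norm_num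
  ring

lemma aux_sqrt_integrable {c κ : ℝ} (h : c < κ) :
    IntegrableOn (fun x => (κ - x) ^ (-(1/2) : ℝ)) (Ioo c κ) := by
  have h1 : IntervalIntegrable (fun u : ℝ => u ^ (-(1/2) : ℝ)) volume 0 (κ - c) :=
    intervalIntegral.intervalIntegrable_rpow' (by norm_num)
  have h2 := (h1.comp_sub_left κ).symm
  simp only [sub_zero, sub_sub_cancel] at h2
  exact ((intervalIntegrable_iff_integrableOn_Ioo_of_le h.le).mp h2)

set_option maxHeartbeats 1600000 in
/-- asymptotics of `F(κ) = ∫_a^κ f(x,κ)/√(κ−x) dx` and of its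
derivative, for `f` with continuous bounded partial derivatives on `[a,b)×(a,b)`. -/
theorem stmt_11 (a b : ℝ) (hab : a < b) (f fx fk fxk : ℝ → ℝ → ℝ)
    (hfx : ∀ x ∈ Ico a b, ∀ κ ∈ Ioo a b,
      HasDerivWithinAt (fun x' => f x' κ) (fx x κ) (Ico a b) x)
    (hfk : ∀ x ∈ Ico a b, ∀ κ ∈ Ioo a b,
      HasDerivAt (fun κ' => f x κ') (fk x κ) κ)
    (hfxk : ∀ x ∈ Ico a b, ∀ κ ∈ Ioo a b,
      HasDerivAt (fun κ' => fx x κ') (fxk x κ) κ)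
    (hfc : ContinuousOn (fun p : ℝ × ℝ => f p.1 p.2) (Ico a b ×ˢ Ioo a b))
    (hfxc : ContinuousOn (fun p : ℝ × ℝ => fx p.1 p.2) (Ico a b ×ˢ Ioo a b))
    (hfkc : ContinuousOn (fun p : ℝ × ℝ => fk p.1 p.2) (Ico a b ×ˢ Ioo a b))
    (hfxkc : ContinuousOn (fun p : ℝ × ℝ => fxk p.1 p.2) (Ico a b ×ˢ Ioo a b))
    (hbdd : ∃ M : ℝ, ∀ x ∈ Ico a b, ∀ κ ∈ Ioo a b,
      |f x κ| ≤ M ∧ |fx x κ| ≤ M ∧ |fk x κ| ≤ M ∧ |fxk x κ| ≤ M)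
    (F : ℝ → ℝ) (hF : ∀ κ : ℝ, F κ = ∫ x in Ioo a κ, f x κ / Real.sqrt (κ - x)) :
    ∃ C > 0, ∀ κ ∈ Ioo a b,
      |F κ - 2 * f a κ * Real.sqrt (κ - a)| ≤ C * (κ - a) ^ ((3 : ℝ) / 2) ∧
      ∃ F' : ℝ, HasDerivAt F F' κ ∧
        |F' - f a κ / Real.sqrt (κ - a)| ≤ C * Real.sqrt (κ - a) := by
  obtain ⟨M, hM⟩ := hbdd
  have hmid : (a + b) / 2 ∈ Ioo a b := ⟨by linarith, by linarith⟩
  have hM0 : 0 ≤ M := le_trans (abs_nonneg _) (hM a ⟨le_refl a, hab⟩ _ hmid).1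
  set g : ℝ → ℝ → ℝ := fun x κ => f (max x a) κ with hgdef
  -- Lipschitz in x
  have lipx : ∀ κ ∈ Ioo a b, ∀ x ∈ Ico a b, ∀ y ∈ Ico a b,
      |f x κ - f y κ| ≤ M * |x - y| := by
    intro κ hκ x hx y hy
    have := Convex.norm_image_sub_le_of_norm_hasDerivWithin_le
      (f := fun x' => f x' κ) (f' := fun x' => fx x' κ)
      (fun z hz => hfx z hz κ hκ) (fun z hz => (hM z hz κ hκ).2.1) (convex_Ico a b) hy hx
    simpa [Real.norm_eq_abs] using this
  -- Lipschitz in κ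
  have lipk : ∀ x ∈ Ico a b, ∀ κ₁ ∈ Ioo a b, ∀ κ₂ ∈ Ioo a b,
      |f x κ₁ - f x κ₂| ≤ M * |κ₁ - κ₂| := by
    intro x hx κ₁ h₁ κ₂ h₂
    have := Convex.norm_image_sub_le_of_norm_hasDerivWithin_le
      (f := fun κ' => f x κ') (f' := fun κ' => fk x κ')
      (fun z hz => (hfk x hx z hz).hasDerivWithinAt) (fun z hz => (hM x hx z hz).2.2.1)
      (convex_Ioo a b) h₂ h₁
    simpa [Real.norm_eq_abs] using this
  -- the max trick keeps values in Ico a b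
  have maxmem : ∀ κ ∈ Ioo a b, ∀ t : ℝ, max (κ - t^2) a ∈ Ico a b := by
    intro κ hκ t
    refine ⟨le_max_right _ _, ?_⟩
    rw [max_lt_iff]
    exact ⟨by nlinarith [sq_nonneg t, hκ.2], hab⟩
  -- continuity in t
  have contg : ∀ κ ∈ Ioo a b, Continuous (fun t : ℝ => g (κ - t^2) κ) := by
    intro κ hκ
    have hcont : Continuous (fun t : ℝ => (max (κ - t^2) a, κ)) := by fun_prop
    exact hfc.comp_continuous hcont (fun t => ⟨maxmem κ hκ t, hκ⟩)
  -- bound on g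
  have gbdd : ∀ κ ∈ Ioo a b, ∀ t : ℝ, |g (κ - t^2) κ| ≤ M := by
    intro κ hκ t
    exact (hM _ (maxmem κ hκ t) κ hκ).1
  -- integrability of the main integrand
  have intf : ∀ κ ∈ Ioo a b, IntegrableOn (fun x => f x κ / Real.sqrt (κ - x)) (Ioo a κ) := by
    intro κ hκ
    have haκ : a < κ := hκ.1
    have hsub : ∀ x ∈ Ioo a κ, x ∈ Ico a b := fun x hx => ⟨hx.1.le, hx.2.trans hκ.2⟩
    have hcf : ContinuousOn (fun x => f x κ) (Ioo a κ) := by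
      have h : Continuous (fun x : ℝ => (x, κ)) := by fun_prop
      exact hfc.comp h.continuousOn (fun x hx => ⟨hsub x hx, hκ⟩)
    have hcs : ContinuousOn (fun x => Real.sqrt (κ - x)) (Ioo a κ) :=
      (Real.continuous_sqrt.comp (continuous_const.sub continuous_id)).continuousOn
    have hcd : ContinuousOn (fun x => f x κ / Real.sqrt (κ - x)) (Ioo a κ) :=
      hcf.div hcs (fun x hx => ne_of_gt (Real.sqrt_pos.2 (by linarith [hx.2])))
    refine Integrable.mono' ((aux_sqrt_integrable haκ).const_mul M)
      (hcd.aestronglyMeasurable measurableSet_Ioo) ?_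
    rw [ae_restrict_iff' measurableSet_Ioo]
    refine .of_forall fun x hx => ?_
    have h1 : (0:ℝ) < κ - x := by linarith [hx.2]
    rw [Real.norm_eq_abs, abs_div, abs_of_nonneg (Real.sqrt_nonneg _), aux_rpow_inv h1.le,
      div_eq_mul_inv]
    exact mul_le_mul_of_nonneg_right ((hM x (hsub x hx) κ hκ).1) (by positivity)
  -- substitution formula
  have sub : ∀ κ ∈ Ioo a b,
      F κ = 2 * ∫ t in (0:ℝ)..Real.sqrt (κ - a), g (κ - t^2) κ := by
    intro κ hκ
    have haκ : a < κ := hκ.1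
    set s := Real.sqrt (κ - a) with hs
    have hs0 : 0 < s := Real.sqrt_pos.2 (by linarith)
    have hs2 : s^2 = κ - a := Real.sq_sqrt (by linarith)
    have hgi : ∀ u v : ℝ, IntervalIntegrable (fun t => g (κ - t^2) κ) volume u v :=
      fun u v => (contg κ hκ).intervalIntegrable u v
    -- step 1 : change of variables for truncated integrals
    have step1 : ∀ δ : ℝ, 0 < δ → δ < s →
        ∫ x in Ioo a (κ - δ^2), f x κ / Real.sqrt (κ - x)
          = 2 * ∫ t in δ..s, g (κ - t^2) κ := by
      intro δ hδ0 hδs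
      have hδ2 : δ^2 < κ - a := by nlinarith
      have haδ : a < κ - δ^2 := by linarith
      have hsub1 : uIcc δ s = Icc δ s := uIcc_of_le hδs.le
      have himg : ∀ t ∈ Icc δ s, κ - t^2 ∈ Icc a (κ - δ^2) := by
        intro t ht
        constructor
        · nlinarith [ht.2, ht.1]
        · nlinarith [ht.1]
      have hconth : ContinuousOn (fun u => f u κ / Real.sqrt (κ - u)) (Icc a (κ - δ^2)) := by
        have hfcont : ContinuousOn (fun u => f u κ) (Icc a (κ - δ^2)) := by
          have hc : Continuous (fun u : ℝ => (u, κ)) := by fun_prop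
          exact hfc.comp hc.continuousOn
            (fun u hu => ⟨⟨hu.1, by nlinarith [hu.2, hκ.2, sq_nonneg δ]⟩, hκ⟩)
        refine hfcont.div
          ((Real.continuous_sqrt.comp (continuous_const.sub continuous_id)).continuousOn) ?_
        intro u hu
        exact ne_of_gt (Real.sqrt_pos.2 (by nlinarith [hu.2]))
      have cov := intervalIntegral.integral_comp_smul_deriv'
        (f := fun t => κ - t^2) (f' := fun t => -(2*t))
        (g := fun u => f u κ / Real.sqrt (κ - u))
        (fun t _ => by simpa using (hasDerivAt_pow 2 t).const_sub κ)
        (by fun_prop)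
        (by
          refine hconth.mono ?_
          rw [hsub1, image_subset_iff]
          exact fun t ht => himg t ht)
      simp only [Function.comp_apply] at cov
      have hlhs : ∫ t in δ..s, -(2*t) • (f (κ - t^2) κ / Real.sqrt (κ - (κ - t^2)))
          = ∫ t in δ..s, (-2) * g (κ - t^2) κ := by
        refine intervalIntegral.integral_congr ?_
        intro t ht
        rw [hsub1] at ht
        have ht0 : 0 < t := lt_of_lt_of_le hδ0 ht.1
        have hta : a ≤ κ - t^2 := by nlinarith [ht.2]
        have : Real.sqrt (κ - (κ - t^2)) = t := by
          rw [show κ - (κ - t^2) = t^2 by ring, Real.sqrt_sq ht0.le]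
        simp only [smul_eq_mul, this, hgdef, max_eq_left hta]
        field_simp
      have hrhs : ∫ u in (κ - δ^2)..(κ - s^2), f u κ / Real.sqrt (κ - u)
          = - ∫ u in a..(κ - δ^2), f u κ / Real.sqrt (κ - u) := by
        have h1 : κ - s^2 = a := by rw [hs2]; ring
        rw [h1, intervalIntegral.integral_symm]
      rw [hlhs, hrhs] at cov
      rw [intervalIntegral.integral_const_mul] at cov
      rw [← integral_Ioc_eq_integral_Ioo, ← intervalIntegral.integral_of_le haδ.le]
      linarith [cov]
    -- step 2: take limits
    set δ : ℕ → ℝ := fun n => s / ((n:ℝ) + 2) with hδdef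
    have hδn : ∀ n : ℕ, 0 < δ n ∧ δ n < s := by
      intro n
      have h2 : (0:ℝ) < (n:ℝ) + 2 := by positivity
      constructor
      · positivity
      · rw [hδdef, div_lt_iff₀ h2]
        nlinarith [Nat.cast_nonneg (α := ℝ) n]
    have hmono : Monotone (fun n : ℕ => Ioo a (κ - (δ n)^2)) := by
      intro m n hmn
      refine Ioo_subset_Ioo_right ?_
      have : δ n ≤ δ m := by
        have hc2 : ((m:ℝ)+2) ≤ ((n:ℝ)+2) := by
          have : (m:ℝ) ≤ (n:ℝ) := by exact_mod_cast hmn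
          linarith
        exact div_le_div_of_nonneg_left hs0.le (by positivity) hc2
      nlinarith [(hδn n).1, (hδn m).1]
    have hunion : (⋃ n, Ioo a (κ - (δ n)^2)) = Ioo a κ := by
      ext x
      simp only [mem_iUnion, mem_Ioo]
      constructor
      · rintro ⟨n, h1, h2⟩
        exact ⟨h1, by nlinarith [(hδn n).1]⟩
      · rintro ⟨h1, h2⟩
        have hκx : 0 < κ - x := by linarith
        obtain ⟨n, hn⟩ := exists_nat_gt (s^2/(κ - x))
        refine ⟨n, h1, ?_⟩
        have hd : s^2 / (κ - x) < (n:ℝ) + 2 := by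
          refine hn.trans ?_
          nlinarith [Nat.cast_nonneg (α := ℝ) n]
        have h3 : s^2 < (κ - x) * ((n:ℝ) + 2) := by
          rw [div_lt_iff₀ hκx] at hd
          linarith
        have h4 : (δ n)^2 < κ - x := by
          rw [hδdef]
          rw [div_pow, div_lt_iff₀ (by positivity)]
          have h5 : ((n:ℝ) + 2) ≤ ((n:ℝ)+2)^2 := by nlinarith [Nat.cast_nonneg (α := ℝ) n]
          nlinarith [hκx]
        linarith
    have hL : Tendsto (fun n => ∫ x in Ioo a (κ - (δ n)^2), f x κ / Real.sqrt (κ - x))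
        atTop (𝓝 (F κ)) := by
      have h6 := tendsto_setIntegral_of_monotone (fun n => measurableSet_Ioo) hmono
        (by rw [hunion]; exact intf κ hκ)
      rw [hunion] at h6
      rw [hF κ]
      exact h6
    have hδ0 : Tendsto δ atTop (𝓝 0) := by
      have h7 : Tendsto (fun n : ℕ => s / (n:ℝ)) atTop (𝓝 0) :=
        tendsto_const_div_atTop_nhds_zero_nat s
      have h8 := h7.comp (tendsto_add_atTop_nat 2)
      refine h8.congr fun n => ?_
      simp only [Function.comp_apply, hδdef]
      push_cast
      ring_nf
    have hsmall : Tendsto (fun n => ∫ t in (0:ℝ)..(δ n), g (κ - t^2) κ) atTop (𝓝 0) := by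
      refine squeeze_zero_norm (fun n => ?_) (by simpa using hδ0.const_mul M)
      have h9 := intervalIntegral.norm_integral_le_of_norm_le_const
        (C := M) (f := fun t => g (κ - t^2) κ) (a := 0) (b := δ n)
        (fun t _ => by rw [Real.norm_eq_abs]; exact gbdd κ hκ t)
      calc ‖∫ t in (0:ℝ)..(δ n), g (κ - t^2) κ‖ ≤ M * |δ n - 0| := h9
        _ = M * δ n := by rw [sub_zero, abs_of_pos (hδn n).1]
    have hR : Tendsto (fun n => 2 * ∫ t in (δ n)..s, g (κ - t^2) κ)
        atTop (𝓝 (2 * ∫ t in (0:ℝ)..s, g (κ - t^2) κ)) := by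
      have h10 : ∀ n, ∫ t in (δ n)..s, g (κ - t^2) κ
          = (∫ t in (0:ℝ)..s, g (κ - t^2) κ) - ∫ t in (0:ℝ)..(δ n), g (κ - t^2) κ := by
        intro n
        have := intervalIntegral.integral_add_adjacent_intervals
          (hgi 0 (δ n)) (hgi (δ n) s)
        linarith [this]
      simp only [h10]
      have := (tendsto_const_nhds (x := ∫ t in (0:ℝ)..s, g (κ - t^2) κ)
        (f := atTop (α := ℕ))).sub hsmall
      rw [sub_zero] at this
      exact this.const_mul 2
    have hLR : ∀ n, ∫ x in Ioo a (κ - (δ n)^2), f x κ / Real.sqrt (κ - x)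
        = 2 * ∫ t in (δ n)..s, g (κ - t^2) κ :=
      fun n => step1 (δ n) (hδn n).1 (hδn n).2
    exact tendsto_nhds_unique (hL.congr fun n => hLR n) hR
  -- part (a)
  have parta : ∀ κ ∈ Ioo a b,
      |F κ - 2 * f a κ * Real.sqrt (κ - a)| ≤ (2*M) * (κ - a) ^ ((3:ℝ)/2) := by
    intro κ hκ
    have haκ : a < κ := hκ.1
    have hsub : ∀ x ∈ Ioo a κ, x ∈ Ico a b := fun x hx => ⟨hx.1.le, hx.2.trans hκ.2⟩
    have haI : a ∈ Ico a b := ⟨le_refl a, hab⟩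
    have i2 : IntegrableOn (fun x => (f a κ) * (κ - x) ^ (-(1/2):ℝ)) (Ioo a κ) :=
      (aux_sqrt_integrable haκ).const_mul _
    have e0 : EqOn (fun x => f x κ / Real.sqrt (κ - x))
        (fun x => f x κ * (κ - x) ^ (-(1/2):ℝ)) (Ioo a κ) := fun x hx => by
      show f x κ / Real.sqrt (κ - x) = f x κ * (κ - x) ^ (-(1/2):ℝ)
      rw [aux_rpow_inv (by linarith [hx.2] : (0:ℝ) ≤ κ - x), div_eq_mul_inv]
    have i1 : IntegrableOn (fun x => f x κ * (κ - x) ^ (-(1/2):ℝ)) (Ioo a κ) :=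
      (intf κ hκ).congr_fun e0 measurableSet_Ioo
    have key : F κ - 2 * f a κ * Real.sqrt (κ - a)
        = ∫ x in Ioo a κ, (f x κ - f a κ) * (κ - x) ^ (-(1/2):ℝ) := by
      rw [hF κ, setIntegral_congr_fun measurableSet_Ioo e0]
      have h5 : ∫ x in Ioo a κ, (f x κ - f a κ) * (κ-x)^(-(1/2):ℝ)
          = (∫ x in Ioo a κ, f x κ * (κ-x)^(-(1/2):ℝ))
            - ∫ x in Ioo a κ, f a κ * (κ-x)^(-(1/2):ℝ) := by
        rw [← integral_sub i1 i2]
        congr 1; ext x; ring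
      rw [h5, integral_const_mul, aux_sqrt_int haκ]; ring
    rw [key, ← Real.norm_eq_abs]
    have hb : ∀ᵐ x ∂(volume.restrict (Ioo a κ)),
        ‖(f x κ - f a κ) * (κ - x)^(-(1/2):ℝ)‖ ≤ (M * (κ - a)) * (κ - x)^(-(1/2):ℝ) := by
      rw [ae_restrict_iff' measurableSet_Ioo]
      refine .of_forall fun x hx => ?_
      have h1 : (0:ℝ) < κ - x := by linarith [hx.2]
      have h2 : (0:ℝ) ≤ (κ - x)^(-(1/2):ℝ) := Real.rpow_nonneg h1.le _
      rw [Real.norm_eq_abs, abs_mul, abs_of_nonneg h2]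
      have h3 : |f x κ - f a κ| ≤ M * (κ - a) := by
        refine (lipx κ hκ x (hsub x hx) a haI).trans ?_
        have h4 : |x - a| ≤ κ - a := by
          rw [abs_of_nonneg (by linarith [hx.1])]; linarith [hx.2]
        exact mul_le_mul_of_nonneg_left h4 hM0
      exact mul_le_mul_of_nonneg_right h3 h2
    refine (norm_integral_le_of_norm_le ((aux_sqrt_integrable haκ).const_mul _) hb).trans ?_
    rw [integral_const_mul, aux_sqrt_int haκ]
    rw [show ((3:ℝ)/2) = 1 + 1/2 by norm_num,
      Real.rpow_add (by linarith : (0:ℝ) < κ - a), Real.rpow_one, ← Real.sqrt_eq_rpow]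
    nlinarith [Real.sqrt_nonneg (κ - a), haκ]
  -- joint derivative of κ ↦ g (κ - c) κ
  have jd : ∀ c : ℝ, 0 ≤ c → ∀ κ₀ ∈ Ioo a b, a < κ₀ - c →
      HasDerivAt (fun κ => g (κ - c) κ) (fx (κ₀ - c) κ₀ + fk (κ₀ - c) κ₀) κ₀ := by
    intro c hc κ₀ hκ₀ hax₀
    set x₀ := κ₀ - c with hx₀def
    have hx₀b : x₀ < b := by have := hκ₀.2; simp only [hx₀def]; linarith
    have hx₀I : x₀ ∈ Ico a b := ⟨hax₀.le, hx₀b⟩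
    have hev : (fun κ => g (κ - c) κ) =ᶠ[𝓝 κ₀] (fun κ => f (κ - c) κ) := by
      have hop : ∀ᶠ κ in 𝓝 κ₀, a < κ - c :=
        (isOpen_lt continuous_const (continuous_id.sub continuous_const)).mem_nhds hax₀
      filter_upwards [hop] with κ hκ
      simp [hgdef, max_eq_left hκ.le]
    have h2 : HasDerivAt (fun κ => f x₀ κ) (fk x₀ κ₀) κ₀ := hfk x₀ hx₀I κ₀ hκ₀
    have h1 : HasDerivAt (fun κ => f (κ - c) κ - f x₀ κ) (fx x₀ κ₀) κ₀ := by
      rw [hasDerivAt_iff_isLittleO, Asymptotics.isLittleO_iff]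
      intro C hC
      have hmem : (Ico a b ×ˢ Ioo a b) ∈ 𝓝 (x₀, κ₀) := by
        refine Filter.mem_of_superset
          ((isOpen_Ioo.prod isOpen_Ioo).mem_nhds ⟨⟨hax₀, hx₀b⟩, hκ₀⟩) ?_
        exact Set.prod_mono Ioo_subset_Ico_self subset_rfl
      have hca : ContinuousAt (fun p : ℝ × ℝ => fx p.1 p.2) (x₀, κ₀) :=
        hfxc.continuousAt hmem
      rw [Metric.continuousAt_iff] at hca
      obtain ⟨δ, hδ0, hδ⟩ := hca C hC
      set r := min (δ/2) (min ((x₀ - a)/2) (min ((b - κ₀)/2) ((κ₀ - a)/2))) with hr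
      have hr0 : 0 < r := by
        have h1 := hκ₀.1; have h2 := hκ₀.2
        simp only [hr, lt_min_iff]
        refine ⟨by linarith, by linarith, by linarith, by linarith⟩
      have hrδ : r ≤ δ/2 := min_le_left _ _
      have hrxa : r ≤ (x₀ - a)/2 := (min_le_right _ _).trans (min_le_left _ _)
      have hrbκ : r ≤ (b - κ₀)/2 :=
        (min_le_right _ _).trans ((min_le_right _ _).trans (min_le_left _ _))
      have hrκa : r ≤ (κ₀ - a)/2 :=
        (min_le_right _ _).trans ((min_le_right _ _).trans (min_le_right _ _))
      have hx₀κ₀ : x₀ ≤ κ₀ := by simp only [hx₀def]; linarith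
      have hS : Icc (x₀ - r) (x₀ + r) ⊆ Ico a b := by
        intro u hu
        exact ⟨by linarith [hu.1], by linarith [hu.2]⟩
      filter_upwards [Metric.ball_mem_nhds κ₀ hr0] with κ hκb
      rw [Metric.mem_ball, Real.dist_eq] at hκb
      have hκIoo : κ ∈ Ioo a b := by
        rcases abs_lt.mp hκb with ⟨hl, hrr⟩
        exact ⟨by linarith [hκ₀.1], by linarith [hκ₀.2]⟩
      have hyS : κ - c ∈ Icc (x₀ - r) (x₀ + r) := by
        rcases abs_lt.mp hκb with ⟨hl, hrr⟩
        constructor <;> simp only [hx₀def] <;> linarith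
      have hxS : x₀ ∈ Icc (x₀ - r) (x₀ + r) := by
        constructor <;> linarith
      have key := Convex.norm_image_sub_le_of_norm_hasDerivWithin_le
        (f := fun u => f u κ - u * fx x₀ κ₀) (f' := fun u => fx u κ - fx x₀ κ₀)
        (s := Icc (x₀ - r) (x₀ + r)) (C := C)
        (fun u hu => ((hfx u (hS hu) κ hκIoo).mono hS).sub
          (by simpa using (hasDerivWithinAt_id u _).mul_const (fx x₀ κ₀)))
        (fun u hu => by
          have hd : dist ((u, κ) : ℝ × ℝ) (x₀, κ₀) < δ := by
            rw [Prod.dist_eq]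
            refine max_lt ?_ ?_
            · rw [Real.dist_eq]
              have h1 := hu.1; have h2 := hu.2
              rw [abs_lt]; constructor <;> linarith
            · rw [Real.dist_eq]; linarith [hκb]
          have := hδ hd
          rw [Real.dist_eq] at this
          exact (le_of_lt (by simpa [Real.norm_eq_abs] using this))) 
        (convex_Icc _ _) hxS hyS
      have heq1 : (κ - c) - x₀ = κ - κ₀ := by simp only [hx₀def]; ring
      have heq2 : (f (κ - c) κ - f x₀ κ) - (f (κ₀ - c) κ₀ - f x₀ κ₀) - (κ - κ₀) • fx x₀ κ₀
          = (f (κ - c) κ - (κ - c) * fx x₀ κ₀) - (f x₀ κ - x₀ * fx x₀ κ₀) := by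
        simp only [smul_eq_mul, hx₀def]; ring
      calc ‖(f (κ - c) κ - f x₀ κ) - (f (κ₀ - c) κ₀ - f x₀ κ₀) - (κ - κ₀) • fx x₀ κ₀‖
          = ‖(f (κ - c) κ - (κ - c) * fx x₀ κ₀) - (f x₀ κ - x₀ * fx x₀ κ₀)‖ := by rw [heq2]
        _ ≤ C * ‖(κ - c) - x₀‖ := key
        _ = C * ‖κ - κ₀‖ := by rw [heq1]
    have hsum := h1.add h2
    replace hsum : HasDerivAt (fun κ => f (κ - c) κ) (fx x₀ κ₀ + fk x₀ κ₀) κ₀ := by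
      refine hsum.congr_of_eventuallyEq (Eventually.of_forall fun κ => ?_); simp
    exact hsum.congr_of_eventuallyEq hev
  -- part (b)
  have partb : ∀ κ₀ ∈ Ioo a b, ∃ F' : ℝ, HasDerivAt F F' κ₀ ∧
      |F' - f a κ₀ / Real.sqrt (κ₀ - a)| ≤ (4*M) * Real.sqrt (κ₀ - a) := by
    intro κ₀ hκ₀
    have haκ₀ : a < κ₀ := hκ₀.1
    set s₀ := Real.sqrt (κ₀ - a) with hs₀def
    have hs₀0 : 0 < s₀ := Real.sqrt_pos.2 (by linarith)
    have hs₀2 : s₀^2 = κ₀ - a := Real.sq_sqrt (by linarith)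
    set ε := min ((κ₀ - a)/2) ((b - κ₀)/2) with hεdef
    have hε0 : 0 < ε := by
      have := hκ₀.2
      simp only [hεdef, lt_min_iff]
      exact ⟨by linarith, by linarith⟩
    have hball : Metric.ball κ₀ ε ⊆ Ioo a b := by
      intro κ hκ
      rw [Metric.mem_ball, Real.dist_eq, abs_lt] at hκ
      have h1 : ε ≤ (κ₀ - a)/2 := min_le_left _ _
      have h2 : ε ≤ (b - κ₀)/2 := min_le_right _ _
      exact ⟨by linarith [hκ.1], by linarith [hκ.2]⟩
    have maxmem' : ∀ x : ℝ, x < b → max x a ∈ Ico a b :=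
      fun x hx => ⟨le_max_right _ _, max_lt hx hab⟩
    -- Lipschitz estimate for κ ↦ g (κ - t²) κ on the ball
    have glip : ∀ t : ℝ, ∀ κ₁ ∈ Metric.ball κ₀ ε, ∀ κ₂ ∈ Metric.ball κ₀ ε,
        |g (κ₁ - t^2) κ₁ - g (κ₂ - t^2) κ₂| ≤ (2*M) * |κ₁ - κ₂| := by
      intro t κ₁ h₁ κ₂ h₂
      have hκ₁ := hball h₁
      have hκ₂ := hball h₂
      have hm₁ : max (κ₁ - t^2) a ∈ Ico a b :=
        maxmem' _ (by nlinarith [sq_nonneg t, hκ₁.2] : κ₁ - t^2 < b)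
      have hm₂ : max (κ₂ - t^2) a ∈ Ico a b :=
        maxmem' _ (by nlinarith [sq_nonneg t, hκ₂.2] : κ₂ - t^2 < b)
      have e1 : |g (κ₁ - t^2) κ₁ - g (κ₂ - t^2) κ₁| ≤ M * |κ₁ - κ₂| := by
        refine (lipx κ₁ hκ₁ _ hm₁ _ hm₂).trans ?_
        refine mul_le_mul_of_nonneg_left ?_ hM0
        have := abs_max_sub_max_le_abs (κ₁ - t^2) (κ₂ - t^2) a
        simpa [show κ₁ - t^2 - (κ₂ - t^2) = κ₁ - κ₂ by ring] using this
      have e2 : |g (κ₂ - t^2) κ₁ - g (κ₂ - t^2) κ₂| ≤ M * |κ₁ - κ₂| :=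
        lipk _ hm₂ κ₁ hκ₁ κ₂ hκ₂
      calc |g (κ₁ - t^2) κ₁ - g (κ₂ - t^2) κ₂|
          ≤ |g (κ₁ - t^2) κ₁ - g (κ₂ - t^2) κ₁| + |g (κ₂ - t^2) κ₁ - g (κ₂ - t^2) κ₂| := by
            exact abs_sub_le _ _ _
        _ ≤ M * |κ₁ - κ₂| + M * |κ₁ - κ₂| := add_le_add e1 e2
        _ = (2*M) * |κ₁ - κ₂| := by ring
    -- derivative of the sqrt endpoint
    have hsd : HasDerivAt (fun κ => Real.sqrt (κ - a)) (1/(2*s₀)) κ₀ := by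
      have h := (Real.hasDerivAt_sqrt (by linarith : κ₀ - a ≠ 0)).comp κ₀
        ((hasDerivAt_id κ₀).sub_const a)
      exact (h.congr_deriv (by rw [hs₀def, mul_one])).congr_of_eventuallyEq
        (Eventually.of_forall fun κ => rfl)
    -- main term: derivative of fixed-endpoint integral
    set Ffun : ℝ → ℝ → ℝ := fun κ t => g (κ - t^2) κ with hFfun
    set D' : ℝ → ℝ := fun t => fx (max (κ₀ - t^2) a) κ₀ + fk (max (κ₀ - t^2) a) κ₀ with hD'
    have hD'cont : Continuous D' := by
      have hc : Continuous (fun t : ℝ => ((max (κ₀ - t^2) a, κ₀) : ℝ × ℝ)) := by fun_prop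
      have hmap : ∀ t : ℝ, ((max (κ₀ - t^2) a, κ₀) : ℝ × ℝ) ∈ Ico a b ×ˢ Ioo a b :=
        fun t => ⟨maxmem κ₀ hκ₀ t, hκ₀⟩
      exact (hfxc.comp_continuous hc hmap).add (hfkc.comp_continuous hc hmap)
    have hCd := intervalIntegral.hasDerivAt_integral_of_dominated_loc_of_lip
      (F := Ffun) (F' := D') (x₀ := κ₀) (a := 0) (b := s₀)
      (bound := fun _ => 2*M) (s := Metric.ball κ₀ ε) (Metric.ball_mem_nhds κ₀ hε0)
      (by
        filter_upwards [isOpen_Ioo.mem_nhds hκ₀] with κ hκ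
        exact (contg κ hκ).aestronglyMeasurable)
      ((contg κ₀ hκ₀).intervalIntegrable 0 s₀)
      hD'cont.aestronglyMeasurable
      (by
        refine Eventually.of_forall fun t _ => ?_
        refine LipschitzOnWith.of_dist_le_mul fun κ₁ h₁ κ₂ h₂ => ?_
        rw [Real.dist_eq, Real.dist_eq, Real.coe_nnabs, abs_of_nonneg (by linarith : (0:ℝ) ≤ 2*M)]
        exact glip t κ₁ h₁ κ₂ h₂)
      (intervalIntegrable_const)
      (by
        have h0 : (volume : Measure ℝ) {s₀} = 0 := measure_singleton s₀
        filter_upwards [measure_eq_zero_iff_ae_notMem.mp h0] with t ht htI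
        rw [uIoc_of_le hs₀0.le] at htI
        have hts : t < s₀ := lt_of_le_of_ne htI.2 (by simpa using ht)
        have hax : a < κ₀ - t^2 := by nlinarith [htI.1, hts]
        have := jd (t^2) (sq_nonneg t) κ₀ hκ₀ hax
        have hmax : max (κ₀ - t^2) a = κ₀ - t^2 := max_eq_left hax.le
        rw [hD']
        simp only [hmax]
        exact this)
    obtain ⟨hDint, hCderiv⟩ := hCd
    set D : ℝ := ∫ t in (0:ℝ)..s₀, D' t with hDdef
    have hDbound : |D| ≤ 2*M*s₀ := by
      have h9 := intervalIntegral.norm_integral_le_of_norm_le_const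
        (C := 2*M) (f := D') (a := 0) (b := s₀)
        (fun t htI => by
          rw [uIoc_of_le hs₀0.le] at htI
          rw [Real.norm_eq_abs, hD']
          have h1 := (hM _ (maxmem κ₀ hκ₀ t) κ₀ hκ₀).2.1
          have h2 := (hM _ (maxmem κ₀ hκ₀ t) κ₀ hκ₀).2.2.1
          calc |fx (max (κ₀ - t^2) a) κ₀ + fk (max (κ₀ - t^2) a) κ₀|
              ≤ |fx (max (κ₀ - t^2) a) κ₀| + |fk (max (κ₀ - t^2) a) κ₀| := abs_add_le _ _
            _ ≤ 2*M := by linarith)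
      rw [Real.norm_eq_abs] at h9
      calc |D| ≤ 2*M * |s₀ - 0| := h9
        _ = 2*M*s₀ := by rw [sub_zero, abs_of_pos hs₀0]
    -- endpoint term P
    have hPd : HasDerivAt (fun κ => ∫ t in s₀..(Real.sqrt (κ - a)), g (κ₀ - t^2) κ₀)
        (f a κ₀ * (1/(2*s₀))) κ₀ := by
      have h1 : HasDerivAt (fun u => ∫ t in s₀..u, g (κ₀ - t^2) κ₀) (g (κ₀ - s₀^2) κ₀) s₀ :=
        intervalIntegral.integral_hasDerivAt_right
          ((contg κ₀ hκ₀).intervalIntegrable _ _)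
          ((contg κ₀ hκ₀).stronglyMeasurableAtFilter _ _)
          (contg κ₀ hκ₀).continuousAt
      have h2 : g (κ₀ - s₀^2) κ₀ = f a κ₀ := by
        rw [hs₀2, hgdef]
        simp [show κ₀ - (κ₀ - a) = a by ring]
      have h3 := h1.comp κ₀ hsd
      rw [h2] at h3
      exact h3
    -- quadratic term Q
    have hQd : HasDerivAt
        (fun κ => ∫ t in s₀..(Real.sqrt (κ - a)), (g (κ - t^2) κ - g (κ₀ - t^2) κ₀)) 0 κ₀ := by
      rw [hasDerivAt_iff_isLittleO, Asymptotics.isLittleO_iff]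
      intro c hc
      set η := min ε (c * s₀ / (2*M + 1)) with hηdef
      have hη0 : 0 < η := by
        simp only [hηdef, lt_min_iff]
        exact ⟨hε0, by positivity⟩
      filter_upwards [Metric.ball_mem_nhds κ₀ hη0] with κ hκb
      have hκball : κ ∈ Metric.ball κ₀ ε :=
        Metric.ball_subset_ball (min_le_left _ _) hκb
      have hκIoo : κ ∈ Ioo a b := hball hκball
      rw [Metric.mem_ball, Real.dist_eq] at hκb
      have hκa : a < κ := hκIoo.1
      set sκ := Real.sqrt (κ - a) with hsκdef
      have hsκ0 : 0 < sκ := Real.sqrt_pos.2 (by linarith)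
      have hsκ2 : sκ^2 = κ - a := Real.sq_sqrt (by linarith)
      -- |sκ - s₀| ≤ |κ - κ₀|/s₀
      have hslip : |sκ - s₀| ≤ |κ - κ₀| / s₀ := by
        have hmul : (sκ - s₀) * (sκ + s₀) = κ - κ₀ := by nlinarith [hsκ2, hs₀2]
        have habs : |sκ - s₀| * (sκ + s₀) = |κ - κ₀| := by
          rw [← abs_of_nonneg (by positivity : (0:ℝ) ≤ sκ + s₀), ← abs_mul, hmul]
        rw [le_div_iff₀ hs₀0]
        calc |sκ - s₀| * s₀ ≤ |sκ - s₀| * (sκ + s₀) := by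
              refine mul_le_mul_of_nonneg_left ?_ (abs_nonneg _)
              linarith [hsκ0.le]
          _ = |κ - κ₀| := habs
      have hQbound : ‖∫ t in s₀..sκ, (g (κ - t^2) κ - g (κ₀ - t^2) κ₀)‖
          ≤ (2*M) * |κ - κ₀| * |sκ - s₀| := by
        have h9 := intervalIntegral.norm_integral_le_of_norm_le_const
          (C := (2*M) * |κ - κ₀|) (f := fun t => g (κ - t^2) κ - g (κ₀ - t^2) κ₀)
          (a := s₀) (b := sκ)
          (fun t _ => by
            rw [Real.norm_eq_abs]
            exact glip t κ hκball κ₀ (Metric.mem_ball_self hε0))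
        exact h9
      -- conclude
      have hQ0 : (∫ t in s₀..(Real.sqrt (κ₀ - a)), (g (κ₀ - t^2) κ₀ - g (κ₀ - t^2) κ₀)) = 0 := by
        simp
      rw [smul_zero, sub_zero, hQ0, sub_zero]
      have hA0 : (0:ℝ) ≤ |κ - κ₀| := abs_nonneg _
      have hBs : |sκ - s₀| * s₀ ≤ |κ - κ₀| := (le_div_iff₀ hs₀0).mp hslip
      have h2 : |κ - κ₀| ≤ c * s₀ / (2*M + 1) := by
        have hm : η ≤ c * s₀ / (2*M + 1) := min_le_right _ _
        linarith [hκb]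
      have h2' : |κ - κ₀| * (2*M+1) ≤ c * s₀ := (le_div_iff₀ (by positivity)).mp h2
      have hineq : (2*M) * |κ - κ₀| * |sκ - s₀| ≤ c * |κ - κ₀| := by
        rw [← mul_le_mul_iff_of_pos_right hs₀0]
        nlinarith [mul_le_mul_of_nonneg_left hBs
            (mul_nonneg (by linarith : (0:ℝ) ≤ 2*M) hA0),
          mul_le_mul_of_nonneg_left h2' hA0, abs_nonneg (sκ - s₀), mul_self_nonneg (|κ - κ₀|)]
      rw [Real.norm_eq_abs, Real.norm_eq_abs]
      calc |∫ t in s₀..sκ, (g (κ - t^2) κ - g (κ₀ - t^2) κ₀)|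
          ≤ (2*M) * |κ - κ₀| * |sκ - s₀| := hQbound
        _ ≤ c * |κ - κ₀| := hineq
    -- assemble
    have hderiv : HasDerivAt
        (fun κ => 2 * ((∫ t in (0:ℝ)..s₀, Ffun κ t)
          + ((∫ t in s₀..(Real.sqrt (κ - a)), g (κ₀ - t^2) κ₀)
            + (∫ t in s₀..(Real.sqrt (κ - a)), (g (κ - t^2) κ - g (κ₀ - t^2) κ₀)))))
        (2 * (D + ((f a κ₀ * (1/(2*s₀))) + 0))) κ₀ :=
      ((hCderiv.add (hPd.add hQd)).const_mul 2)
    have hFeq : F =ᶠ[𝓝 κ₀] (fun κ => 2 * ((∫ t in (0:ℝ)..s₀, Ffun κ t)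
          + ((∫ t in s₀..(Real.sqrt (κ - a)), g (κ₀ - t^2) κ₀)
            + (∫ t in s₀..(Real.sqrt (κ - a)), (g (κ - t^2) κ - g (κ₀ - t^2) κ₀))))) := by
      filter_upwards [isOpen_Ioo.mem_nhds hκ₀] with κ hκ
      have h1 : (∫ t in s₀..(Real.sqrt (κ - a)), g (κ₀ - t^2) κ₀)
            + (∫ t in s₀..(Real.sqrt (κ - a)), (g (κ - t^2) κ - g (κ₀ - t^2) κ₀))
          = ∫ t in s₀..(Real.sqrt (κ - a)), g (κ - t^2) κ := by
        rw [← intervalIntegral.integral_add ((contg κ₀ hκ₀).intervalIntegrable _ _)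
          (((contg κ hκ).intervalIntegrable _ _).sub ((contg κ₀ hκ₀).intervalIntegrable _ _))]
        congr 1
        ext t
        ring
      have h2 : (∫ t in (0:ℝ)..s₀, Ffun κ t) + (∫ t in s₀..(Real.sqrt (κ - a)), g (κ - t^2) κ)
          = ∫ t in (0:ℝ)..(Real.sqrt (κ - a)), g (κ - t^2) κ :=
        intervalIntegral.integral_add_adjacent_intervals
          ((contg κ hκ).intervalIntegrable _ _) ((contg κ hκ).intervalIntegrable _ _)
      rw [h1, sub κ hκ, ← h2]
    have hFd : HasDerivAt F (2 * (D + ((f a κ₀ * (1/(2*s₀))) + 0))) κ₀ :=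
      hderiv.congr_of_eventuallyEq hFeq
    refine ⟨_, hFd, ?_⟩
    have heq : 2 * (D + ((f a κ₀ * (1/(2*s₀))) + 0)) - f a κ₀ / s₀ = 2*D := by
      field_simp
      ring
    rw [heq]
    rw [abs_mul, abs_two]
    linarith [hDbound]
  refine ⟨4*M + 1, by positivity, fun κ hκ => ⟨?_, ?_⟩⟩
  · refine (parta κ hκ).trans ?_
    have h1 : (0:ℝ) ≤ (κ - a) ^ ((3:ℝ)/2) := Real.rpow_nonneg (by linarith [hκ.1]) _
    nlinarith
  · obtain ⟨F', h1, h2⟩ := partb κ hκ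
    exact ⟨F', h1, h2.trans (by nlinarith [Real.sqrt_nonneg (κ - a)])⟩
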